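/- Let 0 < λ < 4 and let (b_t, g_t) be the solution of the ODE b' = -b + λbg, g' = -g - λbg + λb(1-b-g) with initial condition (b₀,g₀) = (1,0), taking values in the simplex Λ = {b ≥ 0, g ≥ 0, b+g ≤ 1}. Then |b_t| + |g_t| → 0 as t → ∞. -/

import Mathlib

open Real Set Filter

lemma mono_aux {f f' : ℝ → ℝ} (hf : ∀ t ≥ (0:ℝ), HasDerivAt f (f' t) t)
    (h' : ∀ t ≥ (0:ℝ), 0 ≤ f' t) : ∀ t ≥ (0:ℝ), f 0 ≤ f t := by
  have hm : MonotoneOn f (Ici (0:ℝ)) := by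
    apply monotoneOn_of_deriv_nonneg (convex_Ici 0)
    · exact fun x hx => (hf x hx).continuousAt.continuousWithinAt
    · intro x hx
      rw [interior_Ici] at hx
      exact (hf x (le_of_lt hx)).differentiableAt.differentiableWithinAt
    · intro x hx
      rw [interior_Ici] at hx
      rw [(hf x (le_of_lt hx)).deriv]
      exact h' x (le_of_lt hx)
  exact fun t ht => hm self_mem_Ici ht ht

lemma invariance {f f' : ℝ → ℝ} (hf : ∀ t ≥ (0:ℝ), HasDerivAt f (f' t) t)
    {c : ℝ} (h0 : f 0 ≤ c) (hneg : ∀ t ≥ (0:ℝ), c ≤ f t → f' t < 0) :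
    ∀ t ≥ (0:ℝ), f t ≤ c := by
  intro t₁ ht₁
  by_contra hgt
  push_neg at hgt
  set S : Set ℝ := {t | t ∈ Icc (0:ℝ) t₁ ∧ f t ≤ c} with hS
  have h0S : (0:ℝ) ∈ S := ⟨⟨le_refl 0, ht₁⟩, h0⟩
  have hne : S.Nonempty := ⟨0, h0S⟩
  have hbdd : BddAbove S := ⟨t₁, fun x hx => hx.1.2⟩
  set T := sSup S with hT
  have hT0 : 0 ≤ T := le_csSup hbdd h0S
  have hTt₁ : T ≤ t₁ := csSup_le hne fun x hx => hx.1.2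
  have hgtT : ∀ x, T < x → x ≤ t₁ → c < f x := by
    intro x hTx hxt
    by_contra hc
    push_neg at hc
    exact absurd (le_csSup hbdd ⟨⟨le_trans hT0 (le_of_lt hTx), hxt⟩, hc⟩) (not_le.2 hTx)
  have hfT : f T ≤ c := by
    by_contra hc
    push_neg at hc
    have hcont : ContinuousAt f T := (hf T hT0).continuousAt
    have hev : f ⁻¹' (Ioi c) ∈ nhds T := hcont (Ioi_mem_nhds hc)
    rcases Metric.mem_nhds_iff.1 hev with ⟨δ, hδ, hball⟩
    rcases exists_lt_of_lt_csSup hne (by linarith : T - δ/2 < T) with ⟨x, hxS, hx⟩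
    have hxT : x ≤ T := le_csSup hbdd hxS
    have : f x ∈ Ioi c := hball (by
      simp only [Metric.mem_ball, Real.dist_eq]
      rw [abs_lt]; constructor <;> linarith)
    exact absurd hxS.2 (not_le.2 this)
  have hTlt : T < t₁ := lt_of_le_of_ne hTt₁ (fun h => by rw [h] at hfT; linarith)
  have hanti : StrictAntiOn f (Icc T t₁) := by
    apply strictAntiOn_of_deriv_neg (convex_Icc T t₁)
    · exact fun x hx => (hf x (le_trans hT0 hx.1)).continuousAt.continuousWithinAt
    · intro x hx
      rw [interior_Icc] at hx
      have hx0 : (0:ℝ) ≤ x := le_trans hT0 hx.1.le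
      rw [(hf x hx0).deriv]
      exact hneg x hx0 (le_of_lt (hgtT x hx.1 hx.2.le))
  have := hanti (left_mem_Icc.2 hTt₁) (right_mem_Icc.2 hTt₁) hTlt
  linarith

theorem stmt_11 (lam : ℝ) (hl0 : 0 < lam) (hl4 : lam < 4) (b g : ℝ → ℝ)
    (hb : ∀ t ≥ (0:ℝ), HasDerivAt b (-b t + lam * b t * g t) t)
    (hg : ∀ t ≥ (0:ℝ), HasDerivAt g
      (-g t - lam * b t * g t + lam * b t * (1 - b t - g t)) t)
    (hΛ : ∀ t ≥ (0:ℝ), 0 ≤ b t ∧ 0 ≤ g t ∧ b t + g t ≤ 1)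
    (hb0 : b 0 = 1) (hg0 : g 0 = 0) :
    Filter.Tendsto (fun t => |b t| + |g t|) Filter.atTop (nhds 0) := by
  set q : ℝ := 1 - (4 - lam)/16 with hq
  have hq1 : q < 1 := by rw [hq]; linarith
  have hq0 : 0 < q := by rw [hq]; linarith
  have hkey : ∀ x : ℝ, lam * x * (2 - x) ≤ q * (1 + lam * x) := by
    intro x
    have h4 : 0 < 4 - lam := by linarith
    rw [hq]
    nlinarith [mul_nonneg hl0.le (sq_nonneg (x - (1 + (4 - lam)/16)/2)),
      mul_pos h4 h4, mul_pos (mul_pos h4 h4) h4]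
  -- positivity of b
  have hbpos : ∀ t ≥ (0:ℝ), Real.exp (-t) ≤ b t := by
    have hφ : ∀ t ≥ (0:ℝ), HasDerivAt (fun t => b t * Real.exp t)
        (lam * b t * g t * Real.exp t) t := by
      intro t ht
      have := (hb t ht).mul (Real.hasDerivAt_exp t)
      refine this.congr_deriv ?_
      ring
    have := mono_aux hφ (fun t ht => by
      have h := hΛ t ht
      exact mul_nonneg (mul_nonneg (mul_nonneg hl0.le h.1) h.2.1) (Real.exp_pos t).le)
    intro t ht
    have h1 := this t ht
    simp only [hb0, one_mul, Real.exp_zero] at h1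
    rw [Real.exp_neg, inv_le_iff_one_le_mul₀ (Real.exp_pos t)]
    linarith [h1]
  have hbp : ∀ t ≥ (0:ℝ), 0 < b t := fun t ht => lt_of_lt_of_le (Real.exp_pos _) (hbpos t ht)
  -- the functions s, w and derivative of w
  set s : ℝ → ℝ := fun t => b t + g t with hsdef
  set w : ℝ → ℝ := fun t => s t ^ 2 / b t with hwdef
  set wd : ℝ → ℝ := fun t =>
    (2 * s t * (-s t + lam * b t * (1 - s t)) * b t - s t ^ 2 * (-b t + lam * b t * g t))
      / b t ^ 2 with hwddef
  have hs : ∀ t ≥ (0:ℝ), HasDerivAt s (-s t + lam * b t * (1 - s t)) t := by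
    intro t ht
    have := (hb t ht).add (hg t ht)
    refine this.congr_deriv ?_
    simp only [hsdef]; ring
  have hw : ∀ t ≥ (0:ℝ), HasDerivAt w (wd t) t := by
    intro t ht
    have := ((hs t ht).pow 2).div (hb t ht) (ne_of_gt (hbp t ht))
    refine this.congr_deriv ?_
    simp only [hwddef, Pi.pow_apply]
    push_cast
    ring
  -- v = (w - q) e^t satisfies invariance
  set v : ℝ → ℝ := fun t => (w t - q) * Real.exp t with hvdef
  set vd : ℝ → ℝ := fun t => (wd t + (w t - q)) * Real.exp t with hvddef
  have hv : ∀ t ≥ (0:ℝ), HasDerivAt v (vd t) t := by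
    intro t ht
    have := ((hw t ht).sub_const q).mul (Real.hasDerivAt_exp t)
    refine this.congr_deriv ?_
    simp only [hvddef]; ring
  have hv0 : v 0 ≤ 1 - q := by
    simp only [hvdef, hwdef, hsdef, hb0, hg0, Real.exp_zero]
    norm_num
  have hvneg : ∀ t ≥ (0:ℝ), 1 - q ≤ v t → vd t < 0 := by
    intro t ht hvt
    have hbt := hbp t ht
    obtain ⟨hb0', hg0', hbg1⟩ := hΛ t ht
    have hspos : 0 < s t := by simp only [hsdef]; linarith
    have hs1 : s t ≤ 1 := by simp only [hsdef]; linarith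
    have het : 0 < Real.exp t := Real.exp_pos t
    have hvt' : 1 - q ≤ (w t - q) * Real.exp t := hvt
    have hwqpos : 0 < w t - q := by
      rcases le_or_gt (w t - q) 0 with h | h
      · nlinarith
      · exact h
    have hqb : q * b t < s t ^ 2 := by
      have : q < w t := by linarith
      rw [hwdef] at this
      simp only at this
      rw [lt_div_iff₀ hbt] at this
      linarith
    simp only [hvddef]
    apply mul_neg_of_neg_of_pos _ het
    have heq : wd t + (w t - q) =
        (2 * s t * (-s t + lam * b t * (1 - s t)) * b t - s t ^ 2 * (-b t + lam * b t * g t)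
          + (s t ^ 2 - q * b t) * b t) / b t ^ 2 := by
      simp only [hwddef, hwdef]
      field_simp
    rw [heq]
    apply div_neg_of_neg_of_pos _ (by positivity)
    have hgs : g t = s t - b t := by simp only [hsdef]; ring
    have hpar : lam * s t * (2 - s t) * b t - lam * s t ^ 3 - q * b t < 0 := by
      nlinarith [mul_le_mul_of_nonneg_right (hkey (s t)) hbt.le,
        mul_pos (mul_pos hl0 hspos) (sub_pos.2 hqb)]
    have hNeq : 2 * s t * (-s t + lam * b t * (1 - s t)) * b t
        - s t ^ 2 * (-b t + lam * b t * g t) + (s t ^ 2 - q * b t) * b t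
        = b t * (lam * s t * (2 - s t) * b t - lam * s t ^ 3 - q * b t) := by
      rw [hgs]; ring
    rw [hNeq]
    exact mul_neg_of_pos_of_neg hbt hpar
  have hwle : ∀ t ≥ (0:ℝ), w t ≤ q + (1 - q) * Real.exp (-t) := by
    intro t ht
    have h1 := invariance hv hv0 hvneg t ht
    have het : 0 < Real.exp t := Real.exp_pos t
    have h2 : w t - q ≤ (1 - q) / Real.exp t := by
      rw [le_div_iff₀ het]; exact h1
    rw [Real.exp_neg]
    rw [div_eq_mul_inv] at h2
    linarith
  have hwle1 : ∀ t ≥ (0:ℝ), w t ≤ 1 := by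
    intro t ht
    have h1 := hwle t ht
    have h2 : Real.exp (-t) ≤ 1 := Real.exp_le_one_iff.2 (by linarith)
    nlinarith [Real.exp_pos (-t)]
  -- u = g / b grows linearly
  set C : ℝ := lam * (1 - q) with hCdef
  have hC : 0 < C := by rw [hCdef]; exact mul_pos hl0 (by linarith)
  set u : ℝ → ℝ := fun t => g t / b t with hudef
  set ud : ℝ → ℝ := fun t =>
    ((-g t - lam * b t * g t + lam * b t * (1 - b t - g t)) * b t
      - g t * (-b t + lam * b t * g t)) / b t ^ 2 with huddef
  have hu : ∀ t ≥ (0:ℝ), HasDerivAt u (ud t) t :=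
    fun t ht => (hg t ht).div (hb t ht) (ne_of_gt (hbp t ht))
  have hudeq : ∀ t ≥ (0:ℝ), ud t = lam * (1 - w t) := by
    intro t ht
    have hbt := hbp t ht
    simp only [huddef, hwdef, hsdef]
    field_simp
    ring
  set hfun : ℝ → ℝ := fun t => u t - C * (t - 1 + Real.exp (-t)) with hfundef
  have hexp' : ∀ t : ℝ, HasDerivAt (fun x : ℝ => x - 1 + Real.exp (-x)) (1 - Real.exp (-t)) t := by
    intro t
    have h1 : HasDerivAt (fun x : ℝ => Real.exp (-x)) (Real.exp (-t) * (-1)) t :=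
      (hasDerivAt_neg t).exp
    have := ((hasDerivAt_id t).sub_const 1).add h1
    refine this.congr_deriv ?_
    ring
  have hhd : ∀ t ≥ (0:ℝ), HasDerivAt hfun (ud t - C * (1 - Real.exp (-t))) t := by
    intro t ht
    exact (hu t ht).sub ((hexp' t).const_mul C)
  have hh' : ∀ t ≥ (0:ℝ), 0 ≤ ud t - C * (1 - Real.exp (-t)) := by
    intro t ht
    rw [hudeq t ht, hCdef]
    nlinarith [mul_nonneg hl0.le (sub_nonneg.2 (hwle t ht))]
  have hul : ∀ t ≥ (0:ℝ), C * (t - 1 + Real.exp (-t)) ≤ u t := by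
    intro t ht
    have h1 := mono_aux hhd hh' t ht
    have h0 : hfun 0 = 0 := by
      simp [hfundef, hudef, hg0, hb0]
    rw [h0] at h1
    simp only [hfundef] at h1
    linarith
  -- main bound : s t ≤ (1 + C (t-1))⁻¹ for t ≥ 1
  have hfinal : ∀ t : ℝ, 1 ≤ t → s t ≤ (1 + C * (t - 1))⁻¹ := by
    intro t ht1
    have ht0 : (0:ℝ) ≤ t := by linarith
    have hu1 : C * (t - 1) ≤ u t := by
      have := hul t ht0
      nlinarith [Real.exp_pos (-t), hC.le]
    have hXpos : 0 < 1 + C * (t - 1) := by nlinarith [hC]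
    obtain ⟨hb0', hg0', hbg1⟩ := hΛ t ht0
    have hbne : b t ≠ 0 := ne_of_gt (hbp t ht0)
    have hs0 : 0 ≤ s t := by simp only [hsdef]; linarith
    have hsw : s t * (1 + u t) = w t := by
      simp only [hsdef, hudef, hwdef]
      field_simp
    rw [← one_div, le_div_iff₀ hXpos]
    calc s t * (1 + C * (t - 1)) ≤ s t * (1 + u t) := by
          apply mul_le_mul_of_nonneg_left _ hs0
          linarith
      _ = w t := hsw
      _ ≤ 1 := hwle1 t ht0
  -- conclusion by squeezing
  have htend : Tendsto (fun t : ℝ => (1 + C * (t - 1))⁻¹) atTop (nhds 0) := by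
    apply Tendsto.inv_tendsto_atTop
    apply tendsto_atTop_add_const_left atTop 1
    apply Tendsto.const_mul_atTop hC
    simpa [sub_eq_add_neg] using tendsto_atTop_add_const_right atTop (-1) tendsto_id
  apply tendsto_of_tendsto_of_tendsto_of_le_of_le' tendsto_const_nhds htend
  · filter_upwards [eventually_ge_atTop (0:ℝ)] with t ht
    positivity
  · filter_upwards [eventually_ge_atTop (1:ℝ)] with t ht
    have ht0 : (0:ℝ) ≤ t := by linarith
    obtain ⟨hb0', hg0', hbg1⟩ := hΛ t ht0
    have : |b t| + |g t| = s t := by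
      rw [abs_of_nonneg hb0', abs_of_nonneg hg0']
    rw [this]
    exact hfinal t ht
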